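/- For every ν ∈ [0,1) the following hold: (i) V_0(0)/V_0(iΥ_ν) = (π/2)·w_ν, so that C_ν = η_ν·(1 − V_0(0)/V_0(iΥ_ν)); (ii) C_ν = (π/12)·(√(9+4ν²) − 4ν) + (1 − π/4)·η_ν; and (iii) C_ν ≤ (√(225+4ν²) − 8ν)/15, i.e. the minimum min{η_ν·(1 − V_0(0)/V_0(iΥ_ν)), (√(225+4ν²) − 8ν)/15} is always attained at the first entry. -/

import Mathlib

/-- Υ_ν := √(1 − ν²). -/
noncomputable def Ups (ν : ℝ) : ℝ := Real.sqrt (1 - ν ^ 2)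

/-- w_ν := Υ_ν · cot(π Υ_ν / 2) for ν ∈ [0,1), with w_1 := 2/π (continuous extension). -/
noncomputable def w (ν : ℝ) : ℝ :=
  if ν = 1 then 2 / Real.pi else Ups ν * Real.cot (Real.pi * Ups ν / 2)

/-- η_ν := (√(9+4ν²) − 4ν)/(3(1 − 2 w_ν)) for ν ≠ √3/2, and η_{√3/2} := 1/(√3 (π−2)). -/
noncomputable def eta (ν : ℝ) : ℝ :=
  if ν = Real.sqrt 3 / 2 then 1 / (Real.sqrt 3 * (Real.pi - 2))
  else (Real.sqrt (9 + 4 * ν ^ 2) - 4 * ν) / (3 * (1 - 2 * w ν))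

/-- C_ν := (1 − π w_ν/2) η_ν. -/
noncomputable def Cnu (ν : ℝ) : ℝ := (1 - Real.pi * w ν / 2) * eta ν

/-- V_l(z) := Γ((l+1+iz)/2)Γ((l+1−iz)/2) / (2 Γ((l+2+iz)/2)Γ((l+2−iz)/2)). -/
noncomputable def Vl (l : ℕ) (z : ℂ) : ℂ :=
  Complex.Gamma ((l + 1 + Complex.I * z) / 2) * Complex.Gamma ((l + 1 - Complex.I * z) / 2) /
    (2 * Complex.Gamma ((l + 2 + Complex.I * z) / 2) * Complex.Gamma ((l + 2 - Complex.I * z) / 2))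


open Real Set

set_option maxHeartbeats 1000000


noncomputable def fw (u : ℝ) : ℝ := u * Real.cos (Real.pi * u / 2) / Real.sin (Real.pi * u / 2)

noncomputable def fw' (u : ℝ) : ℝ :=
  (Real.sin (Real.pi * u / 2) * Real.cos (Real.pi * u / 2) - Real.pi / 2 * u) /
    (Real.sin (Real.pi * u / 2)) ^ 2

lemma sin_pos_of_unit {u : ℝ} (h0 : 0 < u) (h2 : u < 2) : 0 < Real.sin (Real.pi * u / 2) := by
  apply Real.sin_pos_of_pos_of_lt_pi
  · positivity
  · nlinarith [Real.pi_pos]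

lemma hasDerivAt_arg (u : ℝ) : HasDerivAt (fun v : ℝ => Real.pi * v / 2) (Real.pi / 2) u := by
  simpa using ((hasDerivAt_id u).const_mul Real.pi).div_const 2

lemma hasDerivAt_fw {u : ℝ} (h0 : 0 < u) (h2 : u < 2) : HasDerivAt fw (fw' u) u := by
  have hs := sin_pos_of_unit h0 h2
  have hsin : HasDerivAt (fun v : ℝ => Real.sin (Real.pi * v / 2))
      (Real.cos (Real.pi * u / 2) * (Real.pi / 2)) u :=
    (Real.hasDerivAt_sin _).comp u (hasDerivAt_arg u)
  have hcos : HasDerivAt (fun v : ℝ => Real.cos (Real.pi * v / 2))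
      (-Real.sin (Real.pi * u / 2) * (Real.pi / 2)) u :=
    (Real.hasDerivAt_cos _).comp u (hasDerivAt_arg u)
  have hnum : HasDerivAt (fun v : ℝ => v * Real.cos (Real.pi * v / 2))
      (1 * Real.cos (Real.pi * u / 2) + u * (-Real.sin (Real.pi * u / 2) * (Real.pi / 2))) u :=
    (hasDerivAt_id u).mul hcos
  have h := hnum.div hsin hs.ne'
  refine h.congr_deriv (Eq.symm ?_)
  have pyth := Real.sin_sq_add_cos_sq (Real.pi * u / 2)
  have hnum_eq : (1 * Real.cos (Real.pi * u / 2) + u * (-Real.sin (Real.pi * u / 2) * (Real.pi / 2))) *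
      Real.sin (Real.pi * u / 2) - u * Real.cos (Real.pi * u / 2) * (Real.cos (Real.pi * u / 2) * (Real.pi / 2))
      = Real.sin (Real.pi * u / 2) * Real.cos (Real.pi * u / 2) - Real.pi / 2 * u := by
    linear_combination (-(Real.pi / 2) * u) * pyth
  unfold fw'
  rw [hnum_eq]

noncomputable def fw'' (u : ℝ) : ℝ :=
  Real.pi * (Real.pi / 2 * u * Real.cos (Real.pi * u / 2) - Real.sin (Real.pi * u / 2)) /
    (Real.sin (Real.pi * u / 2)) ^ 3

lemma hasDerivAt_fw' {u : ℝ} (h0 : 0 < u) (h2 : u < 2) : HasDerivAt fw' (fw'' u) u := by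
  have hs := sin_pos_of_unit h0 h2
  have hsin : HasDerivAt (fun v : ℝ => Real.sin (Real.pi * v / 2))
      (Real.cos (Real.pi * u / 2) * (Real.pi / 2)) u :=
    (Real.hasDerivAt_sin _).comp u (hasDerivAt_arg u)
  have hcos : HasDerivAt (fun v : ℝ => Real.cos (Real.pi * v / 2))
      (-Real.sin (Real.pi * u / 2) * (Real.pi / 2)) u :=
    (Real.hasDerivAt_cos _).comp u (hasDerivAt_arg u)
  have hnum : HasDerivAt
      (fun v : ℝ => Real.sin (Real.pi * v / 2) * Real.cos (Real.pi * v / 2) - Real.pi / 2 * v)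
      (Real.cos (Real.pi * u / 2) * (Real.pi / 2) * Real.cos (Real.pi * u / 2) +
        Real.sin (Real.pi * u / 2) * (-Real.sin (Real.pi * u / 2) * (Real.pi / 2)) - Real.pi / 2 * 1) u :=
    (hsin.mul hcos).sub ((hasDerivAt_id u).const_mul (Real.pi / 2))
  have hden : HasDerivAt (fun v : ℝ => (Real.sin (Real.pi * v / 2)) ^ 2)
      ((2 : ℕ) * (Real.sin (Real.pi * u / 2)) ^ 1 * (Real.cos (Real.pi * u / 2) * (Real.pi / 2))) u :=
    hsin.pow 2
  have h := hnum.div hden (by positivity)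
  refine h.congr_deriv (Eq.symm ?_)
  have pyth := Real.sin_sq_add_cos_sq (Real.pi * u / 2)
  unfold fw''
  rw [div_eq_div_iff (by positivity) (by positivity)]
  push_cast
  linear_combination ((Real.pi / 2) * Real.sin (Real.pi * u / 2) ^ 5) * pyth

lemma fw_cont : ContinuousOn fw (Ioc 0 1) := fun u hu =>
  ((hasDerivAt_fw hu.1 (by linarith [hu.2])).continuousAt).continuousWithinAt

lemma fw'_cont : ContinuousOn fw' (Ioc 0 1) := fun u hu =>
  ((hasDerivAt_fw' hu.1 (by linarith [hu.2])).continuousAt).continuousWithinAt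

lemma deriv_fw {u : ℝ} (h0 : 0 < u) (h2 : u < 2) : deriv fw u = fw' u :=
  (hasDerivAt_fw h0 h2).deriv

lemma deriv_fw' {u : ℝ} (h0 : 0 < u) (h2 : u < 2) : deriv fw' u = fw'' u :=
  (hasDerivAt_fw' h0 h2).deriv

lemma fw''_nonpos {u : ℝ} (h0 : 0 < u) (h1 : u < 1) : fw'' u ≤ 0 := by
  have hx0 : 0 < Real.pi * u / 2 := by positivity
  have hx2 : Real.pi * u / 2 < Real.pi / 2 := by nlinarith [Real.pi_pos]
  have hs := sin_pos_of_unit h0 (by linarith)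
  have hc : 0 < Real.cos (Real.pi * u / 2) := Real.cos_pos_of_mem_Ioo ⟨by linarith [Real.pi_pos], hx2⟩
  have htan := Real.lt_tan hx0 hx2
  rw [Real.tan_eq_sin_div_cos, lt_div_iff₀ hc] at htan
  have : Real.pi / 2 * u * Real.cos (Real.pi * u / 2) - Real.sin (Real.pi * u / 2) < 0 := by
    nlinarith
  unfold fw''
  apply div_nonpos_of_nonpos_of_nonneg
  · nlinarith [Real.pi_pos]
  · positivity

lemma fw'_neg {u : ℝ} (h0 : 0 < u) (h1 : u ≤ 1) : fw' u < 0 := by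
  have hs := sin_pos_of_unit h0 (by linarith)
  have hsinlt : Real.sin (Real.pi * u / 2) < Real.pi * u / 2 := Real.sin_lt (by positivity)
  have hcle : Real.cos (Real.pi * u / 2) ≤ 1 := Real.cos_le_one _
  unfold fw'
  apply div_neg_of_neg_of_pos
  · nlinarith
  · positivity

lemma fw_strictAnti : StrictAntiOn fw (Ioc 0 1) := by
  apply strictAntiOn_of_deriv_neg (convex_Ioc 0 1) fw_cont
  intro u hu
  rw [interior_Ioc] at hu
  rw [deriv_fw hu.1 (by linarith [hu.2])]
  exact fw'_neg hu.1 hu.2.le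

lemma fw'_anti : AntitoneOn fw' (Ioc 0 1) := by
  apply antitoneOn_of_deriv_nonpos (convex_Ioc 0 1) fw'_cont
  · intro u hu
    rw [interior_Ioc] at hu
    exact (hasDerivAt_fw' hu.1 (by linarith [hu.2])).differentiableAt.differentiableWithinAt
  · intro u hu
    rw [interior_Ioc] at hu
    rw [deriv_fw' hu.1 (by linarith [hu.2])]
    exact fw''_nonpos hu.1 hu.2

lemma fw_concave : ConcaveOn ℝ (Icc (1/4) 1) fw := by
  apply AntitoneOn.concaveOn_of_deriv (convex_Icc _ _)
  · exact fw_cont.mono (fun x hx => ⟨by linarith [hx.1], hx.2⟩)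
  · intro u hu
    rw [interior_Icc] at hu
    exact (hasDerivAt_fw (by linarith [hu.1]) (by linarith [hu.2])).differentiableAt.differentiableWithinAt
  · intro a ha b hb hab
    rw [interior_Icc] at ha hb
    rw [deriv_fw (by linarith [hb.1]) (by linarith [hb.2]), deriv_fw (by linarith [ha.1]) (by linarith [ha.2])]
    exact fw'_anti ⟨by linarith [ha.1], ha.2.le⟩ ⟨by linarith [hb.1], hb.2.le⟩ hab

lemma fw_one : fw 1 = 0 := by
  have : Real.pi * 1 / 2 = Real.pi / 2 := by ring
  simp [fw, this]

lemma fw_half : fw (1/2) = 1/2 := by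
  have h : Real.pi * (1/2) / 2 = Real.pi / 4 := by ring
  have hs : Real.sin (Real.pi / 4) ≠ 0 := by
    rw [Real.sin_pi_div_four]; positivity
  rw [fw, h, Real.sin_pi_div_four, Real.cos_pi_div_four]
  rw [Real.sin_pi_div_four] at hs
  field_simp

lemma fw'_one : fw' 1 = -(Real.pi/2) := by
  have : Real.pi * 1 / 2 = Real.pi / 2 := by ring
  simp [fw', this]

lemma fw'_half : fw' (1/2) = 1 - Real.pi/2 := by
  have h : Real.pi * (1/2) / 2 = Real.pi / 4 := by ring
  have h2 : Real.sqrt 2 ^ 2 = 2 := Real.sq_sqrt (by norm_num)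
  have h2' : (0:ℝ) < Real.sqrt 2 := Real.sqrt_pos.mpr (by norm_num)
  rw [fw', h, Real.sin_pi_div_four, Real.cos_pi_div_four]
  field_simp
  linear_combination Real.pi * h2

lemma fw_quarter : 3/5 ≤ fw (1/4) := by
  have h : Real.pi * (1/4) / 2 = Real.pi / 8 := by ring
  have hs : 0 < Real.sin (Real.pi / 8) := by
    apply Real.sin_pos_of_pos_of_lt_pi <;> nlinarith [Real.pi_pos]
  have hc : 0 < Real.cos (Real.pi / 8) := by
    apply Real.cos_pos_of_mem_Ioo
    constructor <;> nlinarith [Real.pi_pos]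
  have hdouble : Real.cos (Real.pi / 4) = 2 * Real.cos (Real.pi / 8) ^ 2 - 1 := by
    rw [show Real.pi / 4 = 2 * (Real.pi / 8) by ring, Real.cos_two_mul]
  rw [Real.cos_pi_div_four] at hdouble
  have pyth := Real.sin_sq_add_cos_sq (Real.pi / 8)
  have h2 : Real.sqrt 2 ^ 2 = 2 := Real.sq_sqrt (by norm_num)
  have h2' : (0:ℝ) ≤ Real.sqrt 2 := Real.sqrt_nonneg 2
  have hsq2 : 1.41 < Real.sqrt 2 := by nlinarith
  have key : 144 * Real.sin (Real.pi/8)^2 ≤ 25 * Real.cos (Real.pi/8)^2 := by nlinarith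
  have h125 : 12 * Real.sin (Real.pi/8) ≤ 5 * Real.cos (Real.pi/8) := by
    nlinarith [sq_nonneg (12 * Real.sin (Real.pi/8) - 5 * Real.cos (Real.pi/8)), mul_pos hs hc]
  rw [fw, h, le_div_iff₀ hs]
  nlinarith

lemma fw_le_T1 {u : ℝ} (hu : u ∈ Icc (1/2 : ℝ) 1) : fw u ≤ Real.pi/2 * (1 - u) := by
  set g : ℝ → ℝ := fun v => fw v + Real.pi/2 * v with hg
  have hmono : MonotoneOn g (Icc (1/2 : ℝ) 1) := by
    apply monotoneOn_of_deriv_nonneg (convex_Icc _ _)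
    · apply ContinuousOn.add (fw_cont.mono (fun x hx => ⟨by linarith [hx.1], hx.2⟩))
      exact (continuous_const.mul continuous_id).continuousOn
    · intro v hv
      rw [interior_Icc] at hv
      exact (((hasDerivAt_fw (by linarith [hv.1]) (by linarith [hv.2])).add
        ((hasDerivAt_id v).const_mul (Real.pi/2))).differentiableAt).differentiableWithinAt
    · intro v hv
      rw [interior_Icc] at hv
      have hd : HasDerivAt g (fw' v + Real.pi/2 * 1) v :=
        (hasDerivAt_fw (by linarith [hv.1]) (by linarith [hv.2])).add
          ((hasDerivAt_id v).const_mul (Real.pi/2))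
      rw [hd.deriv]
      have : fw' 1 ≤ fw' v := fw'_anti ⟨by linarith [hv.1], hv.2.le⟩ ⟨one_pos, le_refl 1⟩ hv.2.le
      rw [fw'_one] at this
      linarith
  have := hmono hu ⟨by norm_num, le_refl 1⟩ hu.2
  simp only [hg, fw_one] at this
  linarith

lemma fw_le_T2 {u : ℝ} (hu : u ∈ Icc (1/2 : ℝ) 1) : fw u ≤ 1/2 + (1 - Real.pi/2) * (u - 1/2) := by
  set g : ℝ → ℝ := fun v => fw v - (1 - Real.pi/2) * v with hg
  have hanti : AntitoneOn g (Icc (1/2 : ℝ) 1) := by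
    apply antitoneOn_of_deriv_nonpos (convex_Icc _ _)
    · apply ContinuousOn.sub (fw_cont.mono (fun x hx => ⟨by linarith [hx.1], hx.2⟩))
      exact (continuous_const.mul continuous_id).continuousOn
    · intro v hv
      rw [interior_Icc] at hv
      exact (((hasDerivAt_fw (by linarith [hv.1]) (by linarith [hv.2])).sub
        ((hasDerivAt_id v).const_mul (1 - Real.pi/2))).differentiableAt).differentiableWithinAt
    · intro v hv
      rw [interior_Icc] at hv
      have hd : HasDerivAt g (fw' v - (1 - Real.pi/2) * 1) v :=
        (hasDerivAt_fw (by linarith [hv.1]) (by linarith [hv.2])).sub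
          ((hasDerivAt_id v).const_mul (1 - Real.pi/2))
      rw [hd.deriv]
      have : fw' v ≤ fw' (1/2) := fw'_anti ⟨by norm_num, by norm_num⟩
        ⟨by linarith [hv.1], hv.2.le⟩ hv.1.le
      rw [fw'_half] at this
      linarith
  have := hanti ⟨le_refl _, by norm_num⟩ hu hu.1
  simp only [hg, fw_half] at this
  linarith

lemma fw_ge_chordR {u : ℝ} (hu : u ∈ Icc (1/2 : ℝ) 1) : 1 - u ≤ fw u := by
  have h := fw_concave.2 (show (1/2:ℝ) ∈ Icc (1/4:ℝ) 1 by constructor <;> norm_num)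
    (show (1:ℝ) ∈ Icc (1/4:ℝ) 1 by constructor <;> norm_num)
    (show (0:ℝ) ≤ 2 - 2*u by linarith [hu.2])
    (show (0:ℝ) ≤ 2*u - 1 by linarith [hu.1])
    (by ring)
  rw [smul_eq_mul, smul_eq_mul, smul_eq_mul, smul_eq_mul, fw_half, fw_one,
    show (2 - 2*u) * (1/2) + (2*u - 1) * 1 = u by ring] at h
  linarith

lemma fw_ge_chordL {u : ℝ} (hu : u ∈ Icc (1/4 : ℝ) (1/2)) : 7/10 - 2/5*u ≤ fw u := by
  have h := fw_concave.2 (show (1/4:ℝ) ∈ Icc (1/4:ℝ) 1 by constructor <;> norm_num)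
    (show (1/2:ℝ) ∈ Icc (1/4:ℝ) 1 by constructor <;> norm_num)
    (show (0:ℝ) ≤ 2 - 4*u by linarith [hu.2])
    (show (0:ℝ) ≤ 4*u - 1 by linarith [hu.1])
    (by ring)
  rw [smul_eq_mul, smul_eq_mul, smul_eq_mul, smul_eq_mul, fw_half,
    show (2 - 4*u) * (1/4) + (4*u - 1) * (1/2) = u by ring] at h
  nlinarith [fw_quarter, hu.1, hu.2]

lemma fw_ge_low {u : ℝ} (h0 : 0 < u) (h : u ≤ 1/4) : 3/5 ≤ fw u := by
  rcases eq_or_lt_of_le h with rfl | h'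
  · exact fw_quarter
  · have := fw_strictAnti ⟨h0, by linarith⟩ ⟨by norm_num, by norm_num⟩ h'
    linarith [fw_quarter]

lemma fw_lt_half {u : ℝ} (h1 : 1/2 < u) (h2 : u ≤ 1) : fw u < 1/2 := by
  have := fw_strictAnti ⟨by norm_num, by norm_num⟩ ⟨by linarith, h2⟩ h1
  rw [fw_half] at this
  exact this

lemma fw_gt_half {u : ℝ} (h0 : 0 < u) (h : u < 1/2) : 1/2 < fw u := by
  have := fw_strictAnti ⟨h0, by linarith⟩ ⟨by norm_num, by norm_num⟩ h
  rw [fw_half] at this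
  exact this

lemma Vl_zero : Vl 0 0 = ((Real.pi/2 : ℝ) : ℂ) := by
  have h1 : (((0:ℕ) : ℂ) + 1 + Complex.I * 0) / 2 = (((1/2 : ℝ)) : ℂ) := by push_cast; ring
  have h2 : (((0:ℕ) : ℂ) + 1 - Complex.I * 0) / 2 = (((1/2 : ℝ)) : ℂ) := by push_cast; ring
  have h3 : (((0:ℕ) : ℂ) + 2 + Complex.I * 0) / 2 = 1 := by push_cast; ring
  have h4 : (((0:ℕ) : ℂ) + 2 - Complex.I * 0) / 2 = 1 := by push_cast; ring
  rw [Vl, h1, h2, h3, h4, Complex.Gamma_one, Complex.Gamma_ofReal, Real.Gamma_one_half_eq]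
  rw [← Complex.ofReal_mul]
  rw [Real.mul_self_sqrt Real.pi_pos.le]
  push_cast
  ring

lemma Vl_I {u : ℝ} (h0 : 0 < u) (h1 : u < 1) :
    Vl 0 (Complex.I * (u : ℂ)) = ((Real.tan (Real.pi*u/2)/u : ℝ) : ℂ) := by
  have hI : Complex.I * (Complex.I * (u:ℂ)) = -(u:ℂ) := by
    rw [← mul_assoc, Complex.I_mul_I]; ring
  have h1' : (((0:ℕ) : ℂ) + 1 + Complex.I * (Complex.I * (u:ℂ))) / 2 = (((1-u)/2 : ℝ) : ℂ) := by
    rw [hI]; push_cast; ring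
  have h2' : (((0:ℕ) : ℂ) + 1 - Complex.I * (Complex.I * (u:ℂ))) / 2 = (((1+u)/2 : ℝ) : ℂ) := by
    rw [hI]; push_cast; ring
  have h3' : (((0:ℕ) : ℂ) + 2 + Complex.I * (Complex.I * (u:ℂ))) / 2 = (((2-u)/2 : ℝ) : ℂ) := by
    rw [hI]; push_cast; ring
  have h4' : (((0:ℕ) : ℂ) + 2 - Complex.I * (Complex.I * (u:ℂ))) / 2 = (((2+u)/2 : ℝ) : ℂ) := by
    rw [hI]; push_cast; ring
  rw [Vl, h1', h2', h3', h4', Complex.Gamma_ofReal, Complex.Gamma_ofReal,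
    Complex.Gamma_ofReal, Complex.Gamma_ofReal]
  rw [show (2 : ℂ) = ((2:ℝ) : ℂ) by norm_num]
  rw [← Complex.ofReal_mul, ← Complex.ofReal_mul, ← Complex.ofReal_mul, ← Complex.ofReal_div]
  congr 1
  -- now a real identity
  have hsin : 0 < Real.sin (Real.pi * u / 2) := by
    apply Real.sin_pos_of_pos_of_lt_pi
    · positivity
    · nlinarith [Real.pi_pos]
  have hcos : 0 < Real.cos (Real.pi * u / 2) := by
    apply Real.cos_pos_of_mem_Ioo
    constructor <;> nlinarith [Real.pi_pos]
  have r1 : Real.Gamma ((1-u)/2) * Real.Gamma ((1+u)/2) = Real.pi / Real.cos (Real.pi * u / 2) := by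
    rw [show (1-u)/2 = 1 - (1+u)/2 by ring, mul_comm, Real.Gamma_mul_Gamma_one_sub]
    congr 1
    rw [show Real.pi * ((1+u)/2) = Real.pi/2 + Real.pi * u / 2 by ring]
    rw [Real.sin_add, Real.sin_pi_div_two, Real.cos_pi_div_two]
    ring
  have r2 : Real.Gamma ((2+u)/2) = (u/2) * Real.Gamma (u/2) := by
    rw [show (2+u)/2 = u/2 + 1 by ring, Real.Gamma_add_one (by positivity)]
  have r3 : Real.Gamma (u/2) * Real.Gamma ((2-u)/2) = Real.pi / Real.sin (Real.pi * u / 2) := by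
    rw [show (2-u)/2 = 1 - u/2 by ring, Real.Gamma_mul_Gamma_one_sub]
    congr 1
    ring_nf
  rw [r1, r2, Real.tan_eq_sin_div_cos]
  have hden : 2 * Real.Gamma ((2-u)/2) * (u / 2 * Real.Gamma (u / 2))
      = u * (Real.pi / Real.sin (Real.pi * u / 2)) := by
    rw [← r3]; ring
  rw [hden]
  field_simp

section regions
variable {ν u s t W : ℝ}

lemma regionA1 (hν0 : 0 ≤ ν) (hν : ν ≤ 1/2) (hu2 : u^2 = 1 - ν^2) (hu0 : 0 ≤ u) (hu1 : u ≤ 1)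
    (hs : s^2 = 9 + 4*ν^2) (hs0 : 0 ≤ s) (ht : t^2 = 225 + 4*ν^2) (ht0 : 0 ≤ t)
    (hW : W ≤ Real.pi/2*(1-u)) :
    15*((1 - Real.pi*W/2)*(s-4*ν)) ≤ (t-8*ν)*(3*(1-2*W)) := by
  have hπ1 : 3.141592 < Real.pi := Real.pi_gt_d6
  have hπ2 : Real.pi < 3.141593 := Real.pi_lt_d6
  have hs3 : 3 ≤ s := by nlinarith
  have hsle : s ≤ 3.2 := by nlinarith
  have ht15 : 15 ≤ t := by nlinarith
  have htle : t ≤ 15.04 := by nlinarith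
  have hulb : 0.86 ≤ u := by nlinarith
  have hts : 0 ≤ t - 8*ν := by linarith
  have h5s : 5*s ≤ t + 12*ν := by nlinarith [mul_nonneg ht0 hν0, sq_nonneg (t + 12*ν - 5*s)]
  have h5s' : 5*(s - 4*ν) ≤ t - 8*ν := by linarith
  have hcoef : 0 ≤ 6*(t-8*ν) - 15*Real.pi/2*(s-4*ν) := by
    nlinarith [mul_le_mul_of_nonneg_left h5s' (by positivity : (0:ℝ) ≤ 3*Real.pi/2),
      mul_le_mul_of_nonneg_right hπ2.le hts]
  have e2 : (t - 5*s)*(t + 5*s) = -96*ν^2 := by linear_combination ht - 25*hs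
  have hK : 4*t - 32*ν - 5*Real.pi*s + 20*Real.pi*ν ≤ 29 := by nlinarith
  have hKpos : 0 ≤ 4*t - 32*ν - 5*Real.pi*s + 20*Real.pi*ν := by
    nlinarith [mul_le_mul_of_nonneg_left h5s (by positivity : (0:ℝ) ≤ Real.pi),
      mul_le_mul_of_nonneg_right hπ2.le hts]
  have e1 : (1-u)*(1+u) = ν^2 := by linear_combination -hu2
  have h1u : (1-u)*(186/100) ≤ ν^2 := by nlinarith
  have hLK : (1-u)*(4*t - 32*ν - 5*Real.pi*s + 20*Real.pi*ν) ≤ (1-u)*29 :=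
    mul_le_mul_of_nonneg_left hK (by linarith)
  have hLK2 : (1-u)*29 ≤ (2900/186) * ν^2 := by nlinarith
  have hprod : (1-u)*(4*t - 32*ν - 5*Real.pi*s + 20*Real.pi*ν) ≤ 15.6*ν^2 := by
    nlinarith [hLK, hLK2, sq_nonneg ν]
  have hprod2 : Real.pi/4*((1-u)*(4*t - 32*ν - 5*Real.pi*s + 20*Real.pi*ν)) ≤ Real.pi/4*(15.6*ν^2) :=
    mul_le_mul_of_nonneg_left hprod (by positivity)
  have hprod3 : Real.pi/4*(15.6*ν^2) ≤ 12.3*ν^2 := by nlinarith [sq_nonneg ν]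
  have hRHS : -(3.2)*ν^2 ≤ t - 5*s := by
    nlinarith [e2, ht15, hs3, sq_nonneg ν]
  have keyT1 : 15*((1 - Real.pi*(Real.pi/2*(1-u))/2)*(s-4*ν)) ≤
      (t-8*ν)*(3*(1-2*(Real.pi/2*(1-u)))) := by
    have hextra : ν*ν ≤ ν*(1/2) := mul_le_mul_of_nonneg_left hν hν0
    linarith [hprod2, hprod3, hRHS, hextra]
  have hmul : 0 ≤ (Real.pi/2*(1-u) - W) * (6*(t-8*ν) - 15*Real.pi/2*(s-4*ν)) :=
    mul_nonneg (by linarith) hcoef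
  linarith [keyT1, hmul]

end regions

section regions
variable {ν u s t W : ℝ}

-- ν ∈ [1/2,3/5], W ≤ T2
lemma regionA2 (hν0 : 1/2 ≤ ν) (hν : ν ≤ 3/5) (hu2 : u^2 = 1 - ν^2) (hu0 : 0 ≤ u)
    (hs : s^2 = 9 + 4*ν^2) (hs0 : 0 ≤ s) (ht : t^2 = 225 + 4*ν^2) (ht0 : 0 ≤ t)
    (hW : W ≤ 1/2 + (1 - Real.pi/2)*(u - 1/2)) :
    15*((1 - Real.pi*W/2)*(s-4*ν)) ≤ (t-8*ν)*(3*(1-2*W)) := by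
  have hπ1 : 3.141592 < Real.pi := Real.pi_gt_d6
  have hπ2 : Real.pi < 3.141593 := Real.pi_lt_d6
  obtain ⟨X, hX⟩ : ∃ X : ℝ, X = 1/2 + (1 - Real.pi/2)*(u - 1/2) := ⟨_, rfl⟩
  rw [← hX] at hW
  have hs3 : 3.16 ≤ s := by nlinarith
  have hsle : s ≤ 3.24 := by nlinarith
  have ht15 : 15.03 ≤ t := by nlinarith
  have htle : t ≤ 15.05 := by nlinarith
  have hulb : 0.8 ≤ u := by nlinarith
  have huub : u ≤ 0.87 := by nlinarith
  have hts : 10.23 ≤ t - 8*ν := by linarith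
  have hb : s - 4*ν ≤ 1.24 := by linarith
  have hb0 : 0 ≤ s - 4*ν := by linarith
  have hXlb : 0.2887 ≤ X := by
    rw [hX]
    nlinarith [mul_le_mul_of_nonneg_left (show u - 1/2 ≤ 0.37 by linarith)
      (show (0:ℝ) ≤ Real.pi/2 - 1 by nlinarith)]
  have hXub : X ≤ 0.33 := by
    rw [hX]
    nlinarith [mul_le_mul_of_nonneg_left (show 0.3 ≤ u - 1/2 by linarith)
      (show (0:ℝ) ≤ Real.pi/2 - 1 by nlinarith)]
  have ha : 1 - Real.pi*X/2 ≤ 0.547 := by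
    nlinarith [mul_le_mul hπ1.le hXlb (by norm_num) (by positivity : (0:ℝ) ≤ Real.pi)]
  have ha0 : 0 ≤ 1 - Real.pi*X/2 := by
    nlinarith [mul_le_mul hπ2.le hXub (by linarith) (by norm_num : (0:ℝ) ≤ 3.141593)]
  have hc : 0.342 ≤ 1 - 2*X := by
    rw [hX]
    nlinarith [mul_le_mul (show 1.141592 ≤ Real.pi - 2 by linarith)
      (show 0.3 ≤ u - 1/2 by linarith) (by norm_num) (by linarith)]
  have hL : 15*((1 - Real.pi*X/2)*(s-4*ν)) ≤ 15*(0.547*1.24) := by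
    nlinarith [mul_le_mul ha hb hb0 (by norm_num)]
  have hR : 3*(0.342*10.23) ≤ (t-8*ν)*(3*(1-2*X)) := by
    nlinarith [mul_le_mul hc hts (by norm_num) (by linarith)]
  have keyT2 : 15*((1 - Real.pi*X/2)*(s-4*ν)) ≤ (t-8*ν)*(3*(1-2*X)) := by
    nlinarith [hL, hR]
  -- monotone replacement
  have h5s : 5*s ≤ t + 12*ν := by nlinarith [mul_nonneg ht0 (by linarith : (0:ℝ) ≤ ν), sq_nonneg (t + 12*ν - 5*s)]
  have hcoef : 0 ≤ 6*(t-8*ν) - 15*Real.pi/2*(s-4*ν) := by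
    nlinarith [mul_le_mul_of_nonneg_left (show 5*(s-4*ν) ≤ t - 8*ν by linarith)
      (by positivity : (0:ℝ) ≤ 3*Real.pi/2),
      mul_le_mul_of_nonneg_right hπ2.le (by linarith : (0:ℝ) ≤ t - 8*ν)]
  have hmul : 0 ≤ (X - W) * (6*(t-8*ν) - 15*Real.pi/2*(s-4*ν)) :=
    mul_nonneg (by linarith) hcoef
  linarith [keyT2, hmul]

-- ν ∈ [3/5, √3/2), i.e. u ∈ (1/2, 0.8], chain via η bound
lemma regionA3 (hν0 : 3/5 ≤ ν) (hu2 : u^2 = 1 - ν^2) (hu12 : 1/2 < u)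
    (hs : s^2 = 9 + 4*ν^2) (hs0 : 0 ≤ s) (ht : t^2 = 225 + 4*ν^2) (ht0 : 0 ≤ t)
    (hWT2 : W ≤ 1/2 + (1 - Real.pi/2)*(u - 1/2)) (hW1u : 1 - u ≤ W) (hWle : W ≤ 1/2) :
    15*((1 - Real.pi*W/2)*(s-4*ν)) ≤ (t-8*ν)*(3*(1-2*W)) := by
  have hπ1 : 3.141592 < Real.pi := Real.pi_gt_d6
  have hπ2 : Real.pi < 3.141593 := Real.pi_lt_d6
  have hν86 : ν ≤ 0.8661 := by nlinarith
  have hu08 : u ≤ 0.8 := by nlinarith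
  have hA0 : 0 ≤ s - 4*ν := by nlinarith
  have hts : 0 ≤ t - 8*ν := by nlinarith
  have hd1 : (Real.pi - 2)*(u - 1/2) ≤ 1 - 2*W := by nlinarith [hWT2]
  have hnum : 1 - Real.pi*W/2 ≤ (2 - Real.pi + Real.pi*u)/2 := by
    nlinarith [mul_le_mul_of_nonneg_left hW1u (by positivity : (0:ℝ) ≤ Real.pi/2)]
  have key3 : 30*(2 - Real.pi + Real.pi*u)*(u + 1/2) ≤ (Real.pi - 2)*((s + 4*ν)*(t - 8*ν)) := by
    rcases le_or_gt ν 0.75 with hc | hc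
    · have hu66 : 0.66 ≤ u := by nlinarith
      have hs323 : 3.23 ≤ s := by nlinarith
      have ht1504 : 15.04 ≤ t := by nlinarith
      have h1 : 2 - Real.pi + Real.pi*u ≤ 1.3717 := by
        nlinarith [mul_le_mul_of_nonneg_left (show 0.2 ≤ 1 - u by linarith)
          (by positivity : (0:ℝ) ≤ Real.pi)]
      have h2 : 5.63*9.04 ≤ (s + 4*ν)*(t - 8*ν) := by
        nlinarith [mul_le_mul (show (5.63:ℝ) ≤ s + 4*ν by linarith)
          (show (9.04:ℝ) ≤ t - 8*ν by linarith) (by norm_num) (by linarith)]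
      nlinarith [mul_le_mul_of_nonneg_left h2 (show (0:ℝ) ≤ Real.pi - 2 by linarith),
        mul_le_mul h1 (show u + 1/2 ≤ 1.3 by linarith) (by linarith) (by norm_num)]
    · have hu66 : u ≤ 0.6615 := by nlinarith
      have hs335 : 3.35 ≤ s := by nlinarith
      have ht1507 : 15.07 ≤ t := by nlinarith
      have h1 : 2 - Real.pi + Real.pi*u ≤ 0.9366 := by
        nlinarith [mul_le_mul_of_nonneg_left (show 0.3385 ≤ 1 - u by linarith)
          (by positivity : (0:ℝ) ≤ Real.pi)]
      have h1' : 0 ≤ 2 - Real.pi + Real.pi*u := by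
        nlinarith [mul_le_mul_of_nonneg_left (show u - 1/2 ≥ 0 by linarith)
          (by positivity : (0:ℝ) ≤ Real.pi)]
      have h2 : 6.35*8.14 ≤ (s + 4*ν)*(t - 8*ν) := by
        nlinarith [mul_le_mul (show (6.35:ℝ) ≤ s + 4*ν by linarith)
          (show (8.14:ℝ) ≤ t - 8*ν by linarith) (by norm_num) (by linarith)]
      nlinarith [mul_le_mul_of_nonneg_left h2 (show (0:ℝ) ≤ Real.pi - 2 by linarith),
        mul_le_mul h1 (show u + 1/2 ≤ 1.1615 by linarith) (by linarith) (by norm_num)]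
  have e3 : (s - 4*ν)*(s + 4*ν) = 12*((u - 1/2)*(u + 1/2)) := by
    linear_combination hs - 12*hu2
  have hstar : (5/2)*(2 - Real.pi + Real.pi*u)*(s - 4*ν) ≤ (Real.pi - 2)*(u - 1/2)*(t - 8*ν) := by
    have h12u : (0:ℝ) < 12*(u + 1/2) := by linarith
    apply le_of_mul_le_mul_right _ h12u
    have step1 := mul_le_mul_of_nonneg_right key3 hA0
    have e3' : (Real.pi - 2)*((s + 4*ν)*(t - 8*ν))*(s - 4*ν)
        = (Real.pi - 2)*(t - 8*ν)*(12*((u - 1/2)*(u + 1/2))) := by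
      linear_combination ((Real.pi - 2)*(t - 8*ν))*e3
    nlinarith [step1, e3']
  have h1 : 15*((1 - Real.pi*W/2)*(s-4*ν)) ≤ 15*(((2 - Real.pi + Real.pi*u)/2)*(s-4*ν)) := by
    nlinarith [mul_le_mul_of_nonneg_right hnum hA0]
  have h2 : (Real.pi - 2)*(u - 1/2)*(t-8*ν) ≤ (1 - 2*W)*(t-8*ν) :=
    mul_le_mul_of_nonneg_right hd1 hts
  linarith [h1, hstar, h2]

end regions

section regions
variable {ν u s t W : ℝ}

-- u ∈ [1/4,1/2), i.e. ν ∈ (√3/2, √15/4]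
lemma regionC1 (hν1 : ν ≤ 1) (hu2 : u^2 = 1 - ν^2) (hu14 : 1/4 ≤ u) (hu12 : u < 1/2)
    (hs : s^2 = 9 + 4*ν^2) (hs0 : 0 ≤ s) (ht : t^2 = 225 + 4*ν^2) (ht0 : 0 ≤ t)
    (hν0 : 0 ≤ ν)
    (hW : 7/10 - 2/5*u ≤ W) :
    15*((1 - Real.pi*W/2)*(4*ν - s)) ≤ (t-8*ν)*(3*(2*W - 1)) := by
  have hπ1 : 3.141592 < Real.pi := Real.pi_gt_d6
  have hπ2 : Real.pi < 3.141593 := Real.pi_lt_d6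
  have hν86 : 0.866 ≤ ν := by nlinarith
  have hν97 : ν ≤ 0.9683 := by nlinarith
  have hA0 : 0 ≤ 4*ν - s := by nlinarith
  have h43 : 0 ≤ 4*ν^2 - 3 := by nlinarith
  have hs346 : 3.464 ≤ s := by nlinarith
  have ht1509 : 15.099 ≤ t := by nlinarith
  have hts : 7.35 ≤ t - 8*ν := by nlinarith
  -- the key interval inequality
  have key2 : 45*(1 - Real.pi*(7/10 - 2/5*u)/2)*(1 + 2*u) ≤ (6/5)*((t - 8*ν)*(4*ν + s)) := by
    have h1 : 1 - Real.pi*(7/10 - 2/5*u)/2 ≤ 0.2147 := by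
      nlinarith [mul_le_mul_of_nonneg_left (show 7/10 - 2/5*u ≥ 1/2 by linarith)
        (by positivity : (0:ℝ) ≤ Real.pi/2)]
    have h1' : 0 ≤ 1 - Real.pi*(7/10 - 2/5*u)/2 := by
      nlinarith [mul_le_mul_of_nonneg_left (show 7/10 - 2/5*u ≤ 0.6 by linarith)
        (by positivity : (0:ℝ) ≤ Real.pi/2)]
    have h2 : 7.35*6.92 ≤ (t - 8*ν)*(4*ν + s) := by
      nlinarith [mul_le_mul (show (7.35:ℝ) ≤ t - 8*ν by linarith)
        (show (6.92:ℝ) ≤ 4*ν + s by linarith) (by norm_num) (by linarith)]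
    nlinarith [mul_le_mul h1 (show 1 + 2*u ≤ 2 by linarith) (by linarith) (by norm_num)]
  have e5 : (4*ν - s)*(4*ν + s) = 3*(4*ν^2 - 3) := by linear_combination -hs
  have e6 : (1 - 2*u)*(1 + 2*u) = 4*ν^2 - 3 := by linear_combination -4*hu2
  have keyC1 : 15*((1 - Real.pi*(7/10 - 2/5*u)/2)*(4*ν - s)) ≤ (t-8*ν)*(3*(2*(7/10 - 2/5*u) - 1)) := by
    have hP : (0:ℝ) < (1 + 2*u)*(4*ν + s) := by nlinarith
    apply le_of_mul_le_mul_right _ hP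
    have k1 := mul_le_mul_of_nonneg_right key2 h43
    have eqL : 15*((1 - Real.pi*(7/10 - 2/5*u)/2)*(4*ν - s))*((1 + 2*u)*(4*ν + s))
        = 45*(1 - Real.pi*(7/10 - 2/5*u)/2)*(1 + 2*u)*(4*ν^2 - 3) := by
      linear_combination (15*(1 - Real.pi*(7/10 - 2/5*u)/2)*(1 + 2*u))*e5
    have eqR : (t-8*ν)*(3*(2*(7/10 - 2/5*u) - 1))*((1 + 2*u)*(4*ν + s))
        = (6/5)*((t - 8*ν)*(4*ν + s))*(4*ν^2 - 3) := by
      linear_combination ((6/5)*(t-8*ν)*(4*ν + s))*e6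
    linarith [k1, eqL.le, eqL.ge, eqR.le, eqR.ge]
  -- monotone replacement
  have hcoef : 0 ≤ 15*Real.pi/2*(4*ν - s) + 6*(t - 8*ν) := by
    nlinarith [mul_nonneg (by positivity : (0:ℝ) ≤ 15*Real.pi/2) hA0]
  have hmul : 0 ≤ (W - (7/10 - 2/5*u)) * (15*Real.pi/2*(4*ν - s) + 6*(t - 8*ν)) :=
    mul_nonneg (by linarith) hcoef
  linarith [keyC1, hmul]

-- u ∈ (0,1/4], W ≥ 3/5
lemma regionC2 (hν1 : ν ≤ 1) (hu2 : u^2 = 1 - ν^2) (hu14 : u ≤ 1/4) (hu0 : 0 < u)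
    (hs : s^2 = 9 + 4*ν^2) (hs0 : 0 ≤ s) (ht : t^2 = 225 + 4*ν^2) (ht0 : 0 ≤ t)
    (hν0 : 0 ≤ ν)
    (hW : 3/5 ≤ W) :
    15*((1 - Real.pi*W/2)*(4*ν - s)) ≤ (t-8*ν)*(3*(2*W - 1)) := by
  have hπ1 : 3.141592 < Real.pi := Real.pi_gt_d6
  have hπ2 : Real.pi < 3.141593 := Real.pi_lt_d6
  have hν96 : 0.968 ≤ ν := by nlinarith
  have hA0 : 0 ≤ 4*ν - s := by nlinarith
  have hAub : 4*ν - s ≤ 0.43 := by nlinarith [sq_nonneg (s - (4*ν - 0.43))]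
  have ht1512 : 15.12 ≤ t := by nlinarith
  have hts : 7.12 ≤ t - 8*ν := by nlinarith
  have key : 15*((1 - Real.pi*(3/5)/2)*(4*ν - s)) ≤ (t-8*ν)*(3*(2*(3/5:ℝ) - 1)) := by
    have h1 : 1 - Real.pi*(3/5)/2 ≤ 0.058 := by nlinarith
    have h1' : 0 ≤ 1 - Real.pi*(3/5)/2 := by nlinarith
    nlinarith [mul_le_mul h1 hAub hA0 (by norm_num)]
  have hcoef : 0 ≤ 15*Real.pi/2*(4*ν - s) + 6*(t - 8*ν) := by
    nlinarith [mul_nonneg (by positivity : (0:ℝ) ≤ 15*Real.pi/2) hA0]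
  have hmul : 0 ≤ (W - 3/5) * (15*Real.pi/2*(4*ν - s) + 6*(t - 8*ν)) :=
    mul_nonneg (by linarith) hcoef
  linarith [key, hmul]

end regions

/-- For every ν ∈ [0,1):
(i) V_0(0)/V_0(iΥ_ν) = (π/2) w_ν (for ν ∈ (0,1); for ν = 0 this is read as w_0 = 0),
so that C_ν = η_ν (1 − V_0(0)/V_0(iΥ_ν));
(ii) C_ν = (π/12)(√(9+4ν²) − 4ν) + (1 − π/4) η_ν;
(iii) C_ν ≤ (√(225+4ν²) − 8ν)/15, i.e. the minimum in the proof of Theorem 1 is always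
attained at the first entry. -/
theorem Cnu_facts (ν : ℝ) (hν : ν ∈ Set.Ico (0 : ℝ) 1) :
    ((ν ≠ 0 →
        Vl 0 0 / Vl 0 (Complex.I * (Ups ν : ℂ)) = ((Real.pi / 2 * w ν : ℝ) : ℂ) ∧
        ((Cnu ν : ℝ) : ℂ)
          = ((eta ν : ℝ) : ℂ) * (1 - Vl 0 0 / Vl 0 (Complex.I * (Ups ν : ℂ)))) ∧
      w 0 = 0) ∧
    Cnu ν = Real.pi / 12 * (Real.sqrt (9 + 4 * ν ^ 2) - 4 * ν) + (1 - Real.pi / 4) * eta ν ∧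
    Cnu ν ≤ (Real.sqrt (225 + 4 * ν ^ 2) - 8 * ν) / 15 := by
  
  obtain ⟨hν0, hν1⟩ := hν
  have hν1' : ν ≠ 1 := ne_of_lt hν1
  have hu2 : (Ups ν)^2 = 1 - ν^2 := Real.sq_sqrt (by nlinarith)
  have hu0 : 0 < Ups ν := Real.sqrt_pos.mpr (by nlinarith)
  have hu1 : Ups ν ≤ 1 := by nlinarith
  have hwfw : w ν = fw (Ups ν) := by
    rw [w, if_neg hν1', fw, Real.cot_eq_cos_div_sin, ← mul_div_assoc]
  have h3 : (Real.sqrt 3)^2 = 3 := Real.sq_sqrt (by norm_num)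
  have h30 : (0:ℝ) ≤ Real.sqrt 3 := Real.sqrt_nonneg 3
  have h3lb : 1.732 ≤ Real.sqrt 3 := by nlinarith
  have h3ub : Real.sqrt 3 ≤ 1.7321 := by nlinarith
  have hs : (Real.sqrt (9+4*ν^2))^2 = 9+4*ν^2 := Real.sq_sqrt (by positivity)
  have hs0 : (0:ℝ) ≤ Real.sqrt (9+4*ν^2) := Real.sqrt_nonneg _
  have ht : (Real.sqrt (225+4*ν^2))^2 = 225+4*ν^2 := Real.sq_sqrt (by positivity)
  have ht0 : (0:ℝ) ≤ Real.sqrt (225+4*ν^2) := Real.sqrt_nonneg _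
  have hucrit : Ups ν = 1/2 → ν = Real.sqrt 3/2 := by
    intro h
    have hν2 : ν^2 = 3/4 := by nlinarith [hu2]
    have hz : (2*ν - Real.sqrt 3)*(2*ν + Real.sqrt 3) = 0 := by nlinarith
    rcases mul_eq_zero.mp hz with h' | h'
    · linarith
    · nlinarith
  have hcritu : ν = Real.sqrt 3/2 → Ups ν = 1/2 := by
    intro h
    have he : (1:ℝ) - ν^2 = (1/2)^2 := by rw [h, div_pow, h3]; norm_num
    rw [Ups, he, Real.sqrt_sq (by norm_num)]
  refine ⟨⟨?_, ?_⟩, ?_, ?_⟩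
  · -- part (i)
    intro hνne
    have hν0' : 0 < ν := lt_of_le_of_ne hν0 (Ne.symm hνne)
    have hu1' : Ups ν < 1 := by nlinarith
    have hsin : 0 < Real.sin (Real.pi * Ups ν / 2) := sin_pos_of_unit hu0 (by linarith)
    have hcos : 0 < Real.cos (Real.pi * Ups ν / 2) := by
      apply Real.cos_pos_of_mem_Ioo
      constructor <;> nlinarith [Real.pi_pos]
    have key : Vl 0 0 / Vl 0 (Complex.I * ((Ups ν : ℝ) : ℂ)) = ((Real.pi / 2 * w ν : ℝ) : ℂ) := by
      rw [Vl_zero, Vl_I hu0 hu1', ← Complex.ofReal_div, Complex.ofReal_inj]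
      rw [hwfw, fw, Real.tan_eq_sin_div_cos]
      field_simp
    refine ⟨key, ?_⟩
    rw [key, show (1:ℂ) - ((Real.pi / 2 * w ν : ℝ) : ℂ) = ((1 - Real.pi / 2 * w ν : ℝ) : ℂ) by
      push_cast; ring, ← Complex.ofReal_mul, Complex.ofReal_inj]
    rw [Cnu]; ring
  · -- w 0 = 0
    rw [w, if_neg (by norm_num)]
    have hU0 : Ups 0 = 1 := by rw [Ups]; norm_num
    rw [hU0, Real.cot_eq_cos_div_sin, show Real.pi * 1 / 2 = Real.pi/2 by ring, Real.cos_pi_div_two]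
    simp
  · -- part (ii)
    by_cases hc : ν = Real.sqrt 3 / 2
    · have hU : Ups ν = 1/2 := hcritu hc
      have hw : w ν = 1/2 := by rw [hwfw, hU, fw_half]
      have h12 : 9 + 4*ν^2 = 12 := by rw [hc, div_pow, h3]; norm_num
      have h12' : Real.sqrt 12 = 2*Real.sqrt 3 := by
        rw [show (12:ℝ) = (2*Real.sqrt 3)^2 by nlinarith, Real.sqrt_sq (by positivity)]
      rw [Cnu, hw, eta, if_pos hc, h12, h12', hc]
      ring
    · have hUne : Ups ν ≠ 1/2 := fun h => hc (hucrit h)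
      have hwne : 1 - 2*w ν ≠ 0 := by
        rcases lt_or_gt_of_ne hUne with h | h
        · have := fw_gt_half hu0 h
          rw [hwfw]; intro heq; rw [sub_eq_zero] at heq; linarith
        · have := fw_lt_half h hu1
          rw [hwfw]; intro heq; rw [sub_eq_zero] at heq; linarith
      rw [Cnu, eta, if_neg hc]
      have h3ne : (3:ℝ)*(1-2*w ν) ≠ 0 := by
        intro h; apply hwne; linarith [h]
      have hinv : (3*(1-2*w ν)) * (3*(1-2*w ν))⁻¹ = 1 := mul_inv_cancel₀ h3ne
      linear_combination (Real.pi/12*(Real.sqrt (9+4*ν^2) - 4*ν)) * hinv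
  · -- part (iii)
    by_cases hc : ν = Real.sqrt 3 / 2
    · have hU : Ups ν = 1/2 := hcritu hc
      have hw : w ν = 1/2 := by rw [hwfw, hU, fw_half]
      have h228 : 225 + 4*ν^2 = 228 := by rw [hc, div_pow, h3]; norm_num
      have ht228 : (Real.sqrt 228)^2 = 228 := Real.sq_sqrt (by norm_num)
      have ht2280 : (0:ℝ) ≤ Real.sqrt 228 := Real.sqrt_nonneg _
      have ht228lb : 15.09 ≤ Real.sqrt 228 := by nlinarith
      have hπ1 : 3.141592 < Real.pi := Real.pi_gt_d6
      have hπ2 : Real.pi < 3.141593 := Real.pi_lt_d6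
      rw [Cnu, hw, eta, if_pos hc, h228]
      rw [mul_one_div, div_le_div_iff₀ (by nlinarith : (0:ℝ) < Real.sqrt 3*(Real.pi - 2))
        (by norm_num : (0:ℝ) < 15)]
      have hq1 : (8.16:ℝ) ≤ Real.sqrt 228 - 8*ν := by rw [hc]; nlinarith
      have hq2 : (1.97:ℝ) ≤ Real.sqrt 3*(Real.pi - 2) := by nlinarith
      nlinarith [mul_le_mul hq1 hq2 (by norm_num) (by linarith)]
    · have hUne : Ups ν ≠ 1/2 := fun h => hc (hucrit h)
      rcases lt_or_gt_of_ne hUne with hul | hug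
      · -- region C : u < 1/2
        have hwgt : 1/2 < fw (Ups ν) := fw_gt_half hu0 hul
        have hflip : (Real.sqrt (9+4*ν^2) - 4*ν)/(3*(1-2*w ν))
            = (4*ν - Real.sqrt (9+4*ν^2))/(3*(2*w ν - 1)) := by
          rw [← neg_div_neg_eq]; ring_nf
        rw [Cnu, eta, if_neg hc, hflip, mul_div_assoc']
        rw [div_le_div_iff₀ (by rw [hwfw]; linarith : (0:ℝ) < 3*(2*w ν - 1))
          (by norm_num : (0:ℝ) < 15)]
        rw [hwfw]
        rcases le_or_gt (1/4 : ℝ) (Ups ν) with hr | hr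
        · nlinarith [regionC1 hν1.le hu2 hr hul hs hs0 ht ht0 hν0 (fw_ge_chordL ⟨hr, hul.le⟩)]
        · nlinarith [regionC2 hν1.le hu2 hr.le hu0 hs hs0 ht ht0 hν0 (fw_ge_low hu0 hr.le)]
      · -- region A : u > 1/2
        have hwlt : fw (Ups ν) < 1/2 := fw_lt_half hug hu1
        rw [Cnu, eta, if_neg hc, mul_div_assoc']
        rw [div_le_div_iff₀ (by rw [hwfw]; linarith : (0:ℝ) < 3*(1-2*w ν))
          (by norm_num : (0:ℝ) < 15)]
        rw [hwfw]
        rcases le_or_gt ν (1/2) with hr | hr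
        · nlinarith [regionA1 hν0 hr hu2 hu0.le hu1 hs hs0 ht ht0 (fw_le_T1 ⟨hug.le, hu1⟩)]
        · rcases le_or_gt ν (3/5) with hr2 | hr2
          · nlinarith [regionA2 hr.le hr2 hu2 hu0.le hs hs0 ht ht0 (fw_le_T2 ⟨hug.le, hu1⟩)]
          · nlinarith [regionA3 hr2.le hu2 hug hs hs0 ht ht0 (fw_le_T2 ⟨hug.le, hu1⟩)
              (fw_ge_chordR ⟨hug.le, hu1⟩) hwlt.le]
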